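/- Let k ≠ 0, c, A, B be real constants and let I ⊆ ℝ be an open interval on which cosh(k(s + c)) > 1. Define u, v : I → ℝ by u(s) + v(s) = A + B·s and v(s) − u(s) = ln( k² / (8·(cosh(k(s + c)) − 1)) ). Then (u, v) satisfies the truncated system (1/4)·u''(s) = −e^{v(s) − u(s)} and (1/4)·v''(s) = e^{v(s) − u(s)} for all s ∈ I. -/

import Mathlib

/-- The pair `(u, v)` determined by `u + v = A + B·s` and
`v − u = ln(k²/(8(cosh(k(s+c)) − 1)))` solves the E3 truncated system
`(1/4)·u'' = −e^{v−u}`, `(1/4)·v'' = e^{v−u}` on any open interval where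
`cosh(k(s+c)) > 1`. -/
theorem E3_truncation_cosh_solution (k c A B : ℝ) (hk : k ≠ 0) (a b : ℝ)
    (hpos : ∀ s ∈ Set.Ioo a b, 1 < Real.cosh (k * (s + c)))
    (u v : ℝ → ℝ)
    (hu : u = fun s =>
      ((A + B * s) - Real.log (k^2 / (8 * (Real.cosh (k * (s + c)) - 1)))) / 2)
    (hv : v = fun s =>
      ((A + B * s) + Real.log (k^2 / (8 * (Real.cosh (k * (s + c)) - 1)))) / 2) :
    ∀ s ∈ Set.Ioo a b,
      (1/4) * deriv (deriv u) s = -Real.exp (v s - u s) ∧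
      (1/4) * deriv (deriv v) s = Real.exp (v s - u s) := by
  intro s hs
  have hO : IsOpen (Set.Ioo a b) := isOpen_Ioo
  set F : ℝ → ℝ := fun x => Real.cosh (k * (x + c)) with hF
  have hFd : ∀ x : ℝ, HasDerivAt F (k * Real.sinh (k * (x + c))) x := by
    intro x
    have h1 : HasDerivAt (fun y : ℝ => k * (y + c)) k x := by
      simpa using ((hasDerivAt_id x).add_const c).const_mul k
    have := (Real.hasDerivAt_cosh (k * (x + c))).comp x h1
    exact this.congr_deriv (mul_comm _ _)
  set g : ℝ → ℝ := fun x => k * Real.sinh (k * (x + c)) / (F x - 1) with hg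
  have hpos' : ∀ x ∈ Set.Ioo a b, 0 < F x - 1 := by
    intro x hx; have := hpos x hx; simp only [hF]; linarith
  have hk2 : (k ^ 2 : ℝ) ≠ 0 := pow_ne_zero 2 hk
  -- derivative of log (F x - 1) on the interval
  have hlogd : ∀ x ∈ Set.Ioo a b,
      HasDerivAt (fun y => Real.log (F y - 1)) (g x) x := by
    intro x hx
    have hne : F x - 1 ≠ 0 := ne_of_gt (hpos' x hx)
    exact ((hFd x).sub_const 1).log hne
  -- on the interval, the log term splits
  have hlogeq : ∀ x ∈ Set.Ioo a b,
      Real.log (k ^ 2 / (8 * (F x - 1)))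
        = Real.log (k ^ 2 / 8) - Real.log (F x - 1) := by
    intro x hx
    have hne : F x - 1 ≠ 0 := ne_of_gt (hpos' x hx)
    rw [show k ^ 2 / (8 * (F x - 1)) = (k ^ 2 / 8) / (F x - 1) by
        field_simp,
      Real.log_div (div_ne_zero hk2 (by norm_num)) hne]
  -- first derivatives
  have hlin : ∀ x : ℝ, HasDerivAt (fun y => A + B * y) B x := by
    intro x
    simpa using ((hasDerivAt_id x).const_mul B).const_add A
  have hu1 : ∀ x ∈ Set.Ioo a b, HasDerivAt u ((B + g x) / 2) x := by
    intro x hx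
    have heq : u =ᶠ[nhds x]
        (fun y => ((A + B * y) - (Real.log (k ^ 2 / 8) - Real.log (F y - 1))) / 2) := by
      filter_upwards [hO.mem_nhds hx] with y hy
      rw [hu]; simp only [hF] at hlogeq ⊢; rw [hlogeq y hy]
    have hd : HasDerivAt
        (fun y => ((A + B * y) - (Real.log (k ^ 2 / 8) - Real.log (F y - 1))) / 2)
        ((B - (0 - g x)) / 2) x :=
      ((hlin x).sub ((hasDerivAt_const x (Real.log (k ^ 2 / 8))).sub (hlogd x hx))).div_const 2
    have := hd.congr_of_eventuallyEq heq
    simpa using this.congr_deriv (by ring)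
  have hv1 : ∀ x ∈ Set.Ioo a b, HasDerivAt v ((B - g x) / 2) x := by
    intro x hx
    have heq : v =ᶠ[nhds x]
        (fun y => ((A + B * y) + (Real.log (k ^ 2 / 8) - Real.log (F y - 1))) / 2) := by
      filter_upwards [hO.mem_nhds hx] with y hy
      rw [hv]; simp only [hF] at hlogeq ⊢; rw [hlogeq y hy]
    have hd : HasDerivAt
        (fun y => ((A + B * y) + (Real.log (k ^ 2 / 8) - Real.log (F y - 1))) / 2)
        ((B + (0 - g x)) / 2) x :=
      ((hlin x).add ((hasDerivAt_const x (Real.log (k ^ 2 / 8))).sub (hlogd x hx))).div_const 2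
    have := hd.congr_of_eventuallyEq heq
    simpa using this.congr_deriv (by ring)
  -- derivative of g at s
  have hne : F s - 1 ≠ 0 := ne_of_gt (hpos' s hs)
  have hgd : HasDerivAt g (-(k ^ 2) / (F s - 1)) s := by
    have hlin2 : HasDerivAt (fun y : ℝ => k * (y + c)) k s := by
      simpa using ((hasDerivAt_id s).add_const c).const_mul k
    have hsinh : HasDerivAt (fun y => Real.sinh (k * (y + c)))
        (Real.cosh (k * (s + c)) * k) s :=
      by have h := (Real.hasDerivAt_sinh (k * (s + c))).comp s hlin2; exact h
    have hnum : HasDerivAt (fun y => k * Real.sinh (k * (y + c)))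
        (k * (Real.cosh (k * (s + c)) * k)) s := hsinh.const_mul k
    have hden : HasDerivAt (fun y => F y - 1) (k * Real.sinh (k * (s + c))) s :=
      (hFd s).sub_const 1
    have := hnum.div hden hne
    refine this.congr_deriv ?_
    have hce : Real.cosh (k * (s + c)) ^ 2 - Real.sinh (k * (s + c)) ^ 2 = 1 :=
      Real.cosh_sq_sub_sinh_sq _
    have hFv : F s = Real.cosh (k * (s + c)) := rfl
    rw [hFv]
    have hne' : Real.cosh (k * (s + c)) - 1 ≠ 0 := hne
    rw [div_eq_div_iff (pow_ne_zero 2 hne') hne']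
    linear_combination (k ^ 2 * (Real.cosh (k * (s + c)) - 1)) * hce
  -- second derivatives
  have hdu : deriv u =ᶠ[nhds s] (fun x => (B + g x) / 2) := by
    filter_upwards [hO.mem_nhds hs] with x hx
    exact (hu1 x hx).deriv
  have hdv : deriv v =ᶠ[nhds s] (fun x => (B - g x) / 2) := by
    filter_upwards [hO.mem_nhds hs] with x hx
    exact (hv1 x hx).deriv
  have hu2 : deriv (deriv u) s = (-(k ^ 2) / (F s - 1)) / 2 := by
    rw [hdu.deriv_eq]
    exact ((hgd.const_add B).div_const 2).deriv
  have hv2 : deriv (deriv v) s = -((-(k ^ 2) / (F s - 1)) / 2) := by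
    rw [hdv.deriv_eq]
    have : HasDerivAt (fun x => (B - g x) / 2) ((0 - (-(k ^ 2) / (F s - 1))) / 2) s :=
      ((hasDerivAt_const s B).sub hgd).div_const 2
    rw [this.deriv]; ring
  -- exponential value
  have hexp : Real.exp (v s - u s) = k ^ 2 / (8 * (F s - 1)) := by
    have hsub : v s - u s = Real.log (k ^ 2 / (8 * (F s - 1))) := by
      rw [hu, hv]; simp only [hF]; ring
    rw [hsub, Real.exp_log]
    have := hpos' s hs
    positivity
  constructor
  · rw [hu2, hexp]; field_simp; ring
  · rw [hv2, hexp]; field_simp; ring
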